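/- arXiv:2210.14575 — 2 statements merged into one kernel-verified Lean document; each statement's English description precedes it below -/
import Mathlib

section
/- Let ρ and σ be density operators on A_I⊗B_I, and let W_0 = ρ ⊗ 1_{A_O⊗B_O} and W_1 = σ ⊗ 1_{A_O⊗B_O} be the corresponding free process matrices. Then the optimal success probability of discrimination satisfies p_succ(W_0, W_1) = 1/2 + (1/4)·‖ρ − σ‖₁. -/
open scoped ComplexOrder Matrix

namespace ProcessMatrices

/-- The trace norm (sum of singular values) of a complex square matrix. -/
noncomputable def traceNorm {n : Type} [Fintype n] [DecidableEq n] (X : Matrix n n ℂ) : ℝ :=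
  ∑ i, Real.sqrt ((Matrix.posSemidef_conjTranspose_mul_self X).isHermitian.eigenvalues i)

variable {aI aO bI bO : Type} [Fintype aI] [Fintype aO] [Fintype bI] [Fintype bO]
  [DecidableEq aI] [DecidableEq aO] [DecidableEq bI] [DecidableEq bO]
  [Nonempty aI] [Nonempty aO] [Nonempty bI] [Nonempty bO]

/-- `_{A_O} W = (1_{A_O}/dim A_O) ⊗ tr_{A_O} W`, as an operator on the full space. -/
noncomputable def rAO (W : Matrix (aI × aO × bI × bO) (aI × aO × bI × bO) ℂ) :
    Matrix (aI × aO × bI × bO) (aI × aO × bI × bO) ℂ := fun i j =>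
  (if i.2.1 = j.2.1 then ((Fintype.card aO : ℂ))⁻¹ else 0) *
    ∑ k : aO, W (i.1, k, i.2.2.1, i.2.2.2) (j.1, k, j.2.2.1, j.2.2.2)

/-- `_{B_O} W`. -/
noncomputable def rBO (W : Matrix (aI × aO × bI × bO) (aI × aO × bI × bO) ℂ) :
    Matrix (aI × aO × bI × bO) (aI × aO × bI × bO) ℂ := fun i j =>
  (if i.2.2.2 = j.2.2.2 then ((Fintype.card bO : ℂ))⁻¹ else 0) *
    ∑ k : bO, W (i.1, i.2.1, i.2.2.1, k) (j.1, j.2.1, j.2.2.1, k)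

/-- `_{A_O B_O} W`. -/
noncomputable def rAOBO (W : Matrix (aI × aO × bI × bO) (aI × aO × bI × bO) ℂ) :
    Matrix (aI × aO × bI × bO) (aI × aO × bI × bO) ℂ := fun i j =>
  (if i.2.1 = j.2.1 ∧ i.2.2.2 = j.2.2.2 then
      ((Fintype.card aO : ℂ) * (Fintype.card bO : ℂ))⁻¹ else 0) *
    ∑ k : aO, ∑ l : bO, W (i.1, k, i.2.2.1, l) (j.1, k, j.2.2.1, l)

/-- `_{A_I A_O} W`. -/
noncomputable def rAIAO (W : Matrix (aI × aO × bI × bO) (aI × aO × bI × bO) ℂ) :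
    Matrix (aI × aO × bI × bO) (aI × aO × bI × bO) ℂ := fun i j =>
  (if i.1 = j.1 ∧ i.2.1 = j.2.1 then
      ((Fintype.card aI : ℂ) * (Fintype.card aO : ℂ))⁻¹ else 0) *
    ∑ k : aI, ∑ l : aO, W (k, l, i.2.2.1, i.2.2.2) (k, l, j.2.2.1, j.2.2.2)

/-- `_{B_I B_O} W`. -/
noncomputable def rBIBO (W : Matrix (aI × aO × bI × bO) (aI × aO × bI × bO) ℂ) :
    Matrix (aI × aO × bI × bO) (aI × aO × bI × bO) ℂ := fun i j =>
  (if i.2.2.1 = j.2.2.1 ∧ i.2.2.2 = j.2.2.2 then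
      ((Fintype.card bI : ℂ) * (Fintype.card bO : ℂ))⁻¹ else 0) *
    ∑ k : bI, ∑ l : bO, W (i.1, i.2.1, k, l) (j.1, j.2.1, k, l)

/-- `_{A_I A_O B_O} W`. -/
noncomputable def rAIAOBO (W : Matrix (aI × aO × bI × bO) (aI × aO × bI × bO) ℂ) :
    Matrix (aI × aO × bI × bO) (aI × aO × bI × bO) ℂ := fun i j =>
  (if i.1 = j.1 ∧ i.2.1 = j.2.1 ∧ i.2.2.2 = j.2.2.2 then
      ((Fintype.card aI : ℂ) * (Fintype.card aO : ℂ) * (Fintype.card bO : ℂ))⁻¹ else 0) *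
    ∑ k : aI, ∑ l : aO, ∑ m : bO, W (k, l, i.2.2.1, m) (k, l, j.2.2.1, m)

/-- `_{A_O B_I B_O} W`. -/
noncomputable def rAOBIBO (W : Matrix (aI × aO × bI × bO) (aI × aO × bI × bO) ℂ) :
    Matrix (aI × aO × bI × bO) (aI × aO × bI × bO) ℂ := fun i j =>
  (if i.2.1 = j.2.1 ∧ i.2.2.1 = j.2.2.1 ∧ i.2.2.2 = j.2.2.2 then
      ((Fintype.card aO : ℂ) * (Fintype.card bI : ℂ) * (Fintype.card bO : ℂ))⁻¹ else 0) *
    ∑ k : aO, ∑ l : bI, ∑ m : bO, W (i.1, k, l, m) (j.1, k, l, m)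

/-- `W` is a process matrix. -/
structure IsProcessMatrix (W : Matrix (aI × aO × bI × bO) (aI × aO × bI × bO) ℂ) : Prop where
  posSemidef : W.PosSemidef
  condA : rAIAO W = rAIAOBO W
  condB : rBIBO W = rAOBIBO W
  condAB : W = rBO W + rAO W - rAOBO W
  traceEq : W.trace = (Fintype.card aO : ℂ) * (Fintype.card bO : ℂ)

/-- Partial trace over `A_O`. -/
noncomputable def ptrAO (N : Matrix (aI × aO × bI × bO) (aI × aO × bI × bO) ℂ) :
    Matrix (aI × bI × bO) (aI × bI × bO) ℂ := fun i j =>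
  ∑ k : aO, N (i.1, k, i.2.1, i.2.2) (j.1, k, j.2.1, j.2.2)

/-- Partial trace over `B_O`. -/
noncomputable def ptrBO (N : Matrix (aI × aO × bI × bO) (aI × aO × bI × bO) ℂ) :
    Matrix (aI × aO × bI) (aI × aO × bI) ℂ := fun i j =>
  ∑ k : bO, N (i.1, i.2.1, i.2.2, k) (j.1, j.2.1, j.2.2, k)

/-- Partial trace over `A_O ⊗ B_O`. -/
noncomputable def ptrAOBO (N : Matrix (aI × aO × bI × bO) (aI × aO × bI × bO) ℂ) :
    Matrix (aI × bI) (aI × bI) ℂ := fun i j =>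
  ∑ k : aO, ∑ l : bO, N (i.1, k, i.2, l) (j.1, k, j.2, l)

/-- `N` is the Choi matrix of a non-signaling channel. -/
structure MemNS (N : Matrix (aI × aO × bI × bO) (aI × aO × bI × bO) ℂ) : Prop where
  posSemidef : N.PosSemidef
  trChannel : ptrAOBO N = 1
  nsA : ∀ i j : aI × bI × bO, ptrAO N i j =
    (if i.1 = j.1 then ((Fintype.card aI : ℂ))⁻¹ else 0) *
      ∑ m : aI, ptrAO N (m, i.2.1, i.2.2) (m, j.2.1, j.2.2)
  nsB : ∀ i j : aI × aO × bI, ptrBO N i j =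
    (if i.2.2 = j.2.2 then ((Fintype.card bI : ℂ))⁻¹ else 0) *
      ∑ m : bI, ptrBO N (i.1, i.2.1, m) (j.1, j.2.1, m)

/-- `sup { ‖√N (W₀ - W₁) √N‖₁ : N ∈ NS }`. -/
noncomputable def discrBound (W0 W1 : Matrix (aI × aO × bI × bO) (aI × aO × bI × bO) ℂ) : ℝ :=
  sSup { x : ℝ | ∃ N : Matrix (aI × aO × bI × bO) (aI × aO × bI × bO) ℂ, ∃ hN : MemNS N,
    x = traceNorm ((hN.posSemidef.1.eigenvectorUnitary.1 * Matrix.diagonal ((↑) ∘ Real.sqrt ∘ hN.posSemidef.1.eigenvalues) * (star hN.posSemidef.1.eigenvectorUnitary : Matrix (aI × aO × bI × bO) (aI × aO × bI × bO) ℂ)) * (W0 - W1) * (hN.posSemidef.1.eigenvectorUnitary.1 * Matrix.diagonal ((↑) ∘ Real.sqrt ∘ hN.posSemidef.1.eigenvalues) * (star hN.posSemidef.1.eigenvectorUnitary : Matrix (aI × aO × bI × bO) (aI × aO × bI × bO) ℂ))) }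

/-- The optimal probability of discriminating the process matrices `W0` and `W1`
over non-signaling strategies. -/
noncomputable def pSucc (W0 W1 : Matrix (aI × aO × bI × bO) (aI × aO × bI × bO) ℂ) : ℝ :=
  (1/2) * sSup { x : ℝ | ∃ S0 S1 : Matrix (aI × aO × bI × bO) (aI × aO × bI × bO) ℂ,
    S0.PosSemidef ∧ S1.PosSemidef ∧ MemNS (S0 + S1) ∧
    x = ((W0 * S0).trace + (W1 * S1).trace).re }

/-- `W` is a process matrix representing a quantum comb with causal order `A ≺ B`:
`W = W' ⊗ 1_{B_O}` with `tr_{B_I} W' = W'' ⊗ 1_{A_O}`. -/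
def MemCombAB (W : Matrix (aI × aO × bI × bO) (aI × aO × bI × bO) ℂ) : Prop :=
  IsProcessMatrix W ∧
  ∃ W' : Matrix (aI × aO × bI) (aI × aO × bI) ℂ,
    (∀ i j, W i j = (if i.2.2.2 = j.2.2.2 then 1 else 0) *
        W' (i.1, i.2.1, i.2.2.1) (j.1, j.2.1, j.2.2.1)) ∧
    ∃ W'' : Matrix aI aI ℂ, ∀ p q : aI × aO,
      (∑ k : bI, W' (p.1, p.2, k) (q.1, q.2, k)) = (if p.2 = q.2 then 1 else 0) * W'' p.1 q.1

/-- `W` is a process matrix representing a quantum comb with causal order `B ≺ A`: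
`W = W' ⊗ 1_{A_O}` (in the `A_O` slot) with `tr_{A_I} W' = W'' ⊗ 1_{B_O}`. -/
def MemCombBA (W : Matrix (aI × aO × bI × bO) (aI × aO × bI × bO) ℂ) : Prop :=
  IsProcessMatrix W ∧
  ∃ W' : Matrix (aI × bI × bO) (aI × bI × bO) ℂ,
    (∀ i j, W i j = (if i.2.1 = j.2.1 then 1 else 0) *
        W' (i.1, i.2.2.1, i.2.2.2) (j.1, j.2.2.1, j.2.2.2)) ∧
    ∃ W'' : Matrix bI bI ℂ, ∀ p q : bI × bO,
      (∑ k : aI, W' (k, p.1, p.2) (k, q.1, q.2)) = (if p.2 = q.2 then 1 else 0) * W'' p.1 q.1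

/-- `W` is a free process matrix: `W = ρ ⊗ 1_{A_O ⊗ B_O}` for a density operator `ρ`. -/
def MemFree (W : Matrix (aI × aO × bI × bO) (aI × aO × bI × bO) ℂ) : Prop :=
  ∃ ρ : Matrix (aI × bI) (aI × bI) ℂ, ρ.PosSemidef ∧ ρ.trace = 1 ∧
    ∀ i j, W i j = (if i.2.1 = j.2.1 ∧ i.2.2.2 = j.2.2.2 then 1 else 0) *
      ρ (i.1, i.2.2.1) (j.1, j.2.2.1)

/-- `W` is a causally separable process matrix. -/
def MemSep (W : Matrix (aI × aO × bI × bO) (aI × aO × bI × bO) ℂ) : Prop :=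
  ∃ p : ℝ, 0 ≤ p ∧ p ≤ 1 ∧ ∃ W1 W2 : Matrix (aI × aO × bI × bO) (aI × aO × bI × bO) ℂ,
    MemCombAB W1 ∧ MemCombBA W2 ∧ W = (p : ℂ) • W1 + ((1 - p : ℝ) : ℂ) • W2

/-- `(L0, L1)` is an adaptive tester for the causal order `A ≺ B`. -/
structure IsAdaptiveTester (L0 L1 : Matrix (aI × aO × bI × bO) (aI × aO × bI × bO) ℂ) :
    Prop where
  posSemidef0 : L0.PosSemidef
  posSemidef1 : L1.PosSemidef
  comb : ∃ J : Matrix (aI × aO) (aI × aO) ℂ, J.PosSemidef ∧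
    (∀ p q : aI, (∑ k : aO, J (p, k) (q, k)) = if p = q then 1 else 0) ∧
    ∀ i j : aI × aO × bI, ptrBO (L0 + L1) i j =
      (if i.2.2 = j.2.2 then 1 else 0) * J (i.1, i.2.1) (j.1, j.2.1)

/-- The optimal probability of discriminating `W0` and `W1` over adaptive testers. -/
noncomputable def pAdapt (W0 W1 : Matrix (aI × aO × bI × bO) (aI × aO × bI × bO) ℂ) : ℝ :=
  (1/2) * sSup { x : ℝ | ∃ L0 L1 : Matrix (aI × aO × bI × bO) (aI × aO × bI × bO) ℂ,
    IsAdaptiveTester L0 L1 ∧ x = ((W0 * L0).trace + (W1 * L1).trace).re }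



/-! ### Auxiliary lemmas -/

open scoped MatrixOrder

section Aux

variable {n : Type} [Fintype n] [DecidableEq n]

lemma aux_trace_nonneg {M : Matrix n n ℂ} (hM : M.PosSemidef) : 0 ≤ M.trace := by
  exact hM.trace_nonneg

lemma aux_trace_mul_nonneg {A B : Matrix n n ℂ}
    (hA : A.PosSemidef) (hB : B.PosSemidef) : 0 ≤ (A * B).trace := by
  have key : A * B = CFC.sqrt A * (CFC.sqrt A * B) := by
    rw [← Matrix.mul_assoc, CFC.sqrt_mul_sqrt_self A hA.nonneg]
  rw [key, Matrix.trace_mul_comm]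
  have h : CFC.sqrt A * B * CFC.sqrt A = (CFC.sqrt A).conjTranspose * B * CFC.sqrt A := by
    rw [(Matrix.nonneg_iff_posSemidef.mp (CFC.sqrt_nonneg A)).isHermitian.eq]
  apply aux_trace_nonneg
  rw [Matrix.mul_assoc] at h ⊢
  rw [h]
  exact hB.conjTranspose_mul_mul_same (CFC.sqrt A)

/-- Conjugation of a real diagonal matrix by a unitary. -/
noncomputable def uconj (U : Matrix.unitaryGroup n ℂ) (f : n → ℝ) : Matrix n n ℂ :=
  (U : Matrix n n ℂ) * Matrix.diagonal (fun i => (f i : ℂ)) * star (U : Matrix n n ℂ)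

lemma aux_trace_unitary_conj (U : Matrix.unitaryGroup n ℂ) (g : n → ℂ) :
    ((U : Matrix n n ℂ) * Matrix.diagonal g * star (U : Matrix n n ℂ)).trace = ∑ i, g i := by
  rw [Matrix.trace_mul_cycle]
  have h : star (U : Matrix n n ℂ) * (U : Matrix n n ℂ) = 1 := by simp [U.2.1]
  rw [h, Matrix.one_mul, Matrix.trace_diagonal]

lemma uconj_trace (U : Matrix.unitaryGroup n ℂ) (f : n → ℝ) :
    (uconj U f).trace = ((∑ i, f i : ℝ) : ℂ) := by
  rw [uconj, aux_trace_unitary_conj]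
  push_cast
  rfl

lemma uconj_mul (U : Matrix.unitaryGroup n ℂ) (f g : n → ℝ) :
    uconj U f * uconj U g = uconj U (fun i => f i * g i) := by
  rw [uconj, uconj, uconj]
  have h : star (U : Matrix n n ℂ) * (U : Matrix n n ℂ) = 1 := by simp [U.2.1]
  calc ((U : Matrix n n ℂ) * Matrix.diagonal (fun i => (f i : ℂ)) * star (U : Matrix n n ℂ)) *
      ((U : Matrix n n ℂ) * Matrix.diagonal (fun i => (g i : ℂ)) * star (U : Matrix n n ℂ))
      = (U : Matrix n n ℂ) * Matrix.diagonal (fun i => (f i : ℂ)) *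
        (star (U : Matrix n n ℂ) * (U : Matrix n n ℂ)) * Matrix.diagonal (fun i => (g i : ℂ)) *
        star (U : Matrix n n ℂ) := by
        simp only [Matrix.mul_assoc]
    _ = (U : Matrix n n ℂ) * (Matrix.diagonal (fun i => (f i : ℂ)) *
        Matrix.diagonal (fun i => (g i : ℂ))) * star (U : Matrix n n ℂ) := by
        rw [h]; simp only [Matrix.mul_one, Matrix.mul_assoc]
    _ = _ := by
        rw [Matrix.diagonal_mul_diagonal]
        congr 2
        funext i
        push_cast
        ring

lemma uconj_psd (U : Matrix.unitaryGroup n ℂ) (f : n → ℝ) (hf : ∀ i, 0 ≤ f i) :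
    (uconj U f).PosSemidef := by
  have hd : (Matrix.diagonal (fun i => (f i : ℂ))).PosSemidef :=
    Matrix.PosSemidef.diagonal fun i => Complex.zero_le_real.2 (hf i)
  rw [uconj]
  simpa [Matrix.star_eq_conjTranspose] using hd.mul_mul_conjTranspose_same (U : Matrix n n ℂ)

lemma uconj_sub (U : Matrix.unitaryGroup n ℂ) (f g : n → ℝ) :
    uconj U f - uconj U g = uconj U (fun i => f i - g i) := by
  rw [uconj, uconj, uconj, ← Matrix.sub_mul, ← Matrix.mul_sub]
  have hd : (Matrix.diagonal fun i => ((f i : ℝ):ℂ)) - Matrix.diagonal (fun i => ((g i : ℝ):ℂ))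
      = Matrix.diagonal (fun i => ((f i - g i : ℝ):ℂ)) := by
    rw [Matrix.diagonal_sub]
    congr 1
    funext i
    push_cast
    ring
  rw [hd]

lemma uconj_one (U : Matrix.unitaryGroup n ℂ) : uconj U (fun _ => (1:ℝ)) = 1 := by
  have h : (U : Matrix n n ℂ) * star (U : Matrix n n ℂ) = 1 := by simp [U.2.2]
  rw [uconj]
  simp only [Complex.ofReal_one]
  rw [show Matrix.diagonal (fun _ : n => (1:ℂ)) = 1 from Matrix.diagonal_one, Matrix.mul_one, h]

lemma uconj_spectral {A : Matrix n n ℂ} (hA : A.IsHermitian) :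
    A = uconj hA.eigenvectorUnitary hA.eigenvalues := by
  rw [uconj]
  exact hA.spectral_theorem

lemma aux_traceNorm_eq_trace_sqrt (X : Matrix n n ℂ) :
    ((traceNorm X : ℝ) : ℂ) = (CFC.sqrt (Xᴴ * X)).trace := by
  rw [traceNorm, CFC.sqrt_eq_cfc,
    cfc_nnreal_eq_real _ _ (Matrix.posSemidef_conjTranspose_mul_self X).nonneg,
    (Matrix.posSemidef_conjTranspose_mul_self X).1.cfc_eq, Matrix.IsHermitian.cfc,
    Unitary.conjStarAlgAut_apply, aux_trace_unitary_conj]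
  push_cast
  refine Finset.sum_congr rfl fun i _ => ?_
  simp [Function.comp_apply, Real.coe_sqrt, Real.coe_toNNReal',
    max_eq_left ((Matrix.posSemidef_conjTranspose_mul_self X).eigenvalues_nonneg i)]

end Aux

section Aux2

variable {aI aO bI bO : Type} [Fintype aI] [Fintype aO] [Fintype bI] [Fintype bO]
  [DecidableEq aI] [DecidableEq aO] [DecidableEq bI] [DecidableEq bO]

def reorderEquivA : (aI × aO × bI × bO × aI × bI) ≃ (aI × bI × aI × bI × aO × bO) where
  toFun p := (p.1, p.2.2.1, p.2.2.2.2.1, p.2.2.2.2.2, p.2.1, p.2.2.2.1)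
  invFun q := (q.1, q.2.2.2.2.1, q.2.1, q.2.2.2.2.2, q.2.2.1, q.2.2.2.1)
  left_inv _ := rfl
  right_inv _ := rfl

def reorderEquivB : (aO × bO × aI × bI × aI × bI) ≃ (aI × bI × aI × bI × aO × bO) where
  toFun p := (p.2.2.1, p.2.2.2.1, p.2.2.2.2.1, p.2.2.2.2.2, p.1, p.2.1)
  invFun q := (q.2.2.2.2.1, q.2.2.2.2.2, q.1, q.2.1, q.2.2.1, q.2.2.2.1)
  left_inv _ := rfl
  right_inv _ := rfl

def reorderEquivC : (aI × aO × bI × bO × aI × bI) ≃ (aO × bO × aI × bI × aI × bI) where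
  toFun q := (q.2.1, q.2.2.2.1, q.1, q.2.2.1, q.2.2.2.2.1, q.2.2.2.2.2)
  invFun p := (p.2.2.1, p.1, p.2.2.2.1, p.2.1, p.2.2.2.2.1, p.2.2.2.2.2)
  left_inv _ := rfl
  right_inv _ := rfl

lemma trace_free_mul (ρ : Matrix (aI × bI) (aI × bI) ℂ)
    (W S : Matrix (aI × aO × bI × bO) (aI × aO × bI × bO) ℂ)
    (hW : ∀ i j, W i j = (if i.2.1 = j.2.1 ∧ i.2.2.2 = j.2.2.2 then 1 else 0) *
        ρ (i.1, i.2.2.1) (j.1, j.2.2.1)) :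
    (W * S).trace = (ρ * ptrAOBO S).trace := by
  simp only [Matrix.trace, Matrix.diag, Matrix.mul_apply, ptrAOBO, hW]
  simp only [Fintype.sum_prod_type, Finset.mul_sum, Finset.sum_mul, ite_mul, one_mul, zero_mul]
  simp only [ite_and, Finset.sum_ite_irrel, Finset.sum_const_zero, Finset.sum_ite_eq,
    Finset.sum_ite_eq', Finset.mem_univ, if_true]
  calc (∑ x : aI, ∑ x_1 : aO, ∑ x_2 : bI, ∑ x_3 : bO, ∑ x_4 : aI, ∑ x_5 : bI,
        ρ (x, x_2) (x_4, x_5) * S (x_4, x_1, x_5, x_3) (x, x_1, x_2, x_3))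
      = ∑ p : aI × aO × bI × bO × aI × bI,
        ρ (p.1, p.2.2.1) (p.2.2.2.2.1, p.2.2.2.2.2) *
          S (p.2.2.2.2.1, p.2.1, p.2.2.2.2.2, p.2.2.2.1) (p.1, p.2.1, p.2.2.1, p.2.2.2.1) := by
        simp only [Fintype.sum_prod_type]
    _ = ∑ q : aI × bI × aI × bI × aO × bO,
        ρ (q.1, q.2.1) (q.2.2.1, q.2.2.2.1) *
          S (q.2.2.1, q.2.2.2.2.1, q.2.2.2.1, q.2.2.2.2.2) (q.1, q.2.2.2.2.1, q.2.1, q.2.2.2.2.2) := by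
        exact Fintype.sum_equiv reorderEquivA _ _ (fun p => rfl)
    _ = ∑ x : aI, ∑ x_1 : bI, ∑ x_2 : aI, ∑ x_3 : bI, ∑ x_4 : aO, ∑ x_5 : bO,
        ρ (x, x_1) (x_2, x_3) * S (x_2, x_4, x_3, x_5) (x, x_4, x_1, x_5) := by
        simp only [Fintype.sum_prod_type]

lemma ptrAOBO_posSemidef {S : Matrix (aI × aO × bI × bO) (aI × aO × bI × bO) ℂ}
    (hS : S.PosSemidef) : (ptrAOBO S).PosSemidef := by
  refine Matrix.PosSemidef.of_dotProduct_mulVec_nonneg ?_ ?_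
  · ext i j
    simp only [Matrix.conjTranspose_apply, ptrAOBO, star_sum]
    refine Finset.sum_congr rfl fun k _ => Finset.sum_congr rfl fun l _ => ?_
    have := congrFun (congrFun hS.isHermitian (i.1, k, i.2, l)) (j.1, k, j.2, l)
    simpa [Matrix.conjTranspose_apply] using this
  · intro y
    have key : dotProduct (star y) ((ptrAOBO S) *ᵥ y) =
        ∑ k : aO, ∑ l : bO, dotProduct
          (star (fun i : aI × aO × bI × bO => if i.2.1 = k ∧ i.2.2.2 = l then y (i.1, i.2.2.1) else 0))
          (S *ᵥ (fun i : aI × aO × bI × bO => if i.2.1 = k ∧ i.2.2.2 = l then y (i.1, i.2.2.1) else 0)) := by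
      simp only [dotProduct, Matrix.mulVec, ptrAOBO, Pi.star_apply,
        apply_ite (starRingEnd ℂ), star_zero]
      simp only [Fintype.sum_prod_type, Finset.mul_sum, Finset.sum_mul, ite_mul, zero_mul,
        mul_ite, mul_zero]
      simp only [apply_ite (star : ℂ → ℂ), star_zero, ite_mul, zero_mul]
      simp only [ite_and, Finset.sum_ite_irrel, Finset.sum_const_zero, Finset.sum_ite_eq,
        Finset.sum_ite_eq', Finset.mem_univ, if_true]
      calc (∑ x : aI, ∑ x_1 : bI, ∑ x_2 : aI, ∑ x_3 : bI, ∑ x_4 : aO, ∑ x_5 : bO,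
            star (y (x, x_1)) * (S (x, x_4, x_1, x_5) (x_2, x_4, x_3, x_5) * y (x_2, x_3)))
          = ∑ q : aI × bI × aI × bI × aO × bO,
            star (y (q.1, q.2.1)) * (S (q.1, q.2.2.2.2.1, q.2.1, q.2.2.2.2.2)
              (q.2.2.1, q.2.2.2.2.1, q.2.2.2.1, q.2.2.2.2.2) * y (q.2.2.1, q.2.2.2.1)) := by
            simp only [Fintype.sum_prod_type]
        _ = ∑ p : aO × bO × aI × bI × aI × bI,
            star (y (p.2.2.1, p.2.2.2.1)) * (S (p.2.2.1, p.1, p.2.2.2.1, p.2.1)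
              (p.2.2.2.2.1, p.1, p.2.2.2.2.2, p.2.1) * y (p.2.2.2.2.1, p.2.2.2.2.2)) := by
            exact Fintype.sum_equiv reorderEquivB.symm _ _ (fun q => rfl)
        _ = _ := by simp only [Fintype.sum_prod_type]
    rw [key]
    exact Finset.sum_nonneg fun k _ => Finset.sum_nonneg fun l _ => hS.dotProduct_mulVec_nonneg _

lemma ptrAOBO_add (S0 S1 : Matrix (aI × aO × bI × bO) (aI × aO × bI × bO) ℂ) :
    ptrAOBO (S0 + S1) = ptrAOBO S0 + ptrAOBO S1 := by
  ext i j
  simp [ptrAOBO, Finset.sum_add_distrib]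

lemma freeScaled_posSemidef (P : Matrix (aI × bI) (aI × bI) ℂ) (hP : P.PosSemidef)
    (c : ℝ) (hc : 0 ≤ c) :
    Matrix.PosSemidef (Matrix.of fun (i j : aI × aO × bI × bO) =>
      (if i.2.1 = j.2.1 ∧ i.2.2.2 = j.2.2.2 then (c:ℂ) else 0) *
        P (i.1, i.2.2.1) (j.1, j.2.2.1)) := by
  refine Matrix.PosSemidef.of_dotProduct_mulVec_nonneg ?_ ?_
  · ext i j
    have hst : star (P (j.1, j.2.2.1) (i.1, i.2.2.1)) = P (i.1, i.2.2.1) (j.1, j.2.2.1) := by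
      conv_rhs => rw [← hP.1]
      simp [Matrix.conjTranspose_apply]
    simp only [Matrix.conjTranspose_apply, Matrix.of_apply, star_mul',
      apply_ite (star : ℂ → ℂ), star_zero, Complex.star_def, Complex.conj_ofReal]
    rw [show ((starRingEnd ℂ) (P (j.1, j.2.2.1) (i.1, i.2.2.1))) = P (i.1, i.2.2.1) (j.1, j.2.2.1)
      from hst]
    by_cases h1 : i.2.1 = j.2.1 <;> by_cases h2 : i.2.2.2 = j.2.2.2 <;>
      simp [h1, h2, eq_comm, mul_comm]
  · intro x
    have key : dotProduct (star x) ((Matrix.of fun (i j : aI × aO × bI × bO) =>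
        (if i.2.1 = j.2.1 ∧ i.2.2.2 = j.2.2.2 then (c:ℂ) else 0) *
          P (i.1, i.2.2.1) (j.1, j.2.2.1)) *ᵥ x) =
        (c : ℂ) * ∑ k : aO, ∑ l : bO, dotProduct
          (star (fun u : aI × bI => x (u.1, k, u.2, l)))
          (P *ᵥ (fun u : aI × bI => x (u.1, k, u.2, l))) := by
      simp only [dotProduct, Matrix.mulVec, Matrix.of_apply, Pi.star_apply,
        Finset.mul_sum]
      simp only [Fintype.sum_prod_type, Finset.mul_sum, Finset.sum_mul, ite_mul, zero_mul,
        mul_ite, mul_zero]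
      simp only [ite_and, Finset.sum_ite_irrel, Finset.sum_const_zero, Finset.sum_ite_eq,
        Finset.sum_ite_eq', Finset.mem_univ, if_true]
      calc (∑ x_1 : aI, ∑ x_2 : aO, ∑ x_3 : bI, ∑ x_4 : bO, ∑ x_5 : aI, ∑ x_6 : bI,
            star (x (x_1, x_2, x_3, x_4)) * ((c:ℂ) * P (x_1, x_3) (x_5, x_6) * x (x_5, x_2, x_6, x_4)))
          = ∑ q : aI × aO × bI × bO × aI × bI,
            star (x (q.1, q.2.1, q.2.2.1, q.2.2.2.1)) * ((c:ℂ) *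
              P (q.1, q.2.2.1) (q.2.2.2.2.1, q.2.2.2.2.2) *
              x (q.2.2.2.2.1, q.2.1, q.2.2.2.2.2, q.2.2.2.1)) := by
            simp only [Fintype.sum_prod_type]
        _ = ∑ p : aO × bO × aI × bI × aI × bI,
            (c:ℂ) * (star (x (p.2.2.1, p.1, p.2.2.2.1, p.2.1)) *
              (P (p.2.2.1, p.2.2.2.1) (p.2.2.2.2.1, p.2.2.2.2.2) *
                x (p.2.2.2.2.1, p.1, p.2.2.2.2.2, p.2.1))) := by
            refine Fintype.sum_equiv reorderEquivC _ _ (fun q => ?_)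
            simp only [reorderEquivC, Equiv.coe_fn_mk]
            ring
        _ = _ := by simp only [Fintype.sum_prod_type]
    rw [key]
    have hsum : 0 ≤ ∑ k : aO, ∑ l : bO, dotProduct
          (star (fun u : aI × bI => x (u.1, k, u.2, l)))
          (P *ᵥ (fun u : aI × bI => x (u.1, k, u.2, l))) :=
      Finset.sum_nonneg fun k _ => Finset.sum_nonneg fun l _ => hP.dotProduct_mulVec_nonneg _
    exact mul_nonneg (Complex.zero_le_real.2 hc) hsum

variable [Nonempty aI] [Nonempty aO] [Nonempty bI] [Nonempty bO]

lemma memNS_scaledId :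
    MemNS (Matrix.of fun (i j : aI × aO × bI × bO) =>
      if i = j then ((Fintype.card aO : ℂ) * (Fintype.card bO : ℂ))⁻¹ else 0) := by
  set c : ℂ := ((Fintype.card aO : ℂ) * (Fintype.card bO : ℂ))⁻¹ with hc_def
  have haO : (Fintype.card aO : ℂ) ≠ 0 := Nat.cast_ne_zero.2 Fintype.card_ne_zero
  have hbO : (Fintype.card bO : ℂ) ≠ 0 := Nat.cast_ne_zero.2 Fintype.card_ne_zero
  have haI : (Fintype.card aI : ℂ) ≠ 0 := Nat.cast_ne_zero.2 Fintype.card_ne_zero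
  have hbI : (Fintype.card bI : ℂ) ≠ 0 := Nat.cast_ne_zero.2 Fintype.card_ne_zero
  have hAO : ∀ i j : aI × bI × bO, ptrAO (Matrix.of fun (i j : aI × aO × bI × bO) =>
      if i = j then c else 0) i j = if i = j then ((Fintype.card bO : ℂ))⁻¹ else 0 := by
    intro i j
    simp only [ptrAO, Matrix.of_apply]
    rw [Finset.sum_congr rfl (fun k _ => if_congr (show ((i.1, k, i.2.1, i.2.2) =
      (j.1, k, j.2.1, j.2.2)) ↔ i = j by
        constructor
        · intro h; simp only [Prod.ext_iff] at h ⊢; tauto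
        · intro h; rw [h]) rfl rfl)]
    rw [Finset.sum_const, Finset.card_univ, nsmul_eq_mul]
    split_ifs
    · rw [hc_def, mul_inv]; field_simp
    · rw [mul_zero]
  have hBO : ∀ i j : aI × aO × bI, ptrBO (Matrix.of fun (i j : aI × aO × bI × bO) =>
      if i = j then c else 0) i j = if i = j then ((Fintype.card aO : ℂ))⁻¹ else 0 := by
    intro i j
    simp only [ptrBO, Matrix.of_apply]
    rw [Finset.sum_congr rfl (fun k _ => if_congr (show ((i.1, i.2.1, i.2.2, k) =
      (j.1, j.2.1, j.2.2, k)) ↔ i = j by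
        constructor
        · intro h; simp only [Prod.ext_iff] at h ⊢; tauto
        · intro h; rw [h]) rfl rfl)]
    rw [Finset.sum_const, Finset.card_univ, nsmul_eq_mul]
    split_ifs
    · rw [hc_def, mul_inv]; field_simp
    · rw [mul_zero]
  constructor
  · have h : (Matrix.of fun (i j : aI × aO × bI × bO) => if i = j then c else 0) =
        Matrix.diagonal (fun _ => c) := by
      ext i j
      simp [Matrix.diagonal_apply]
    rw [h]
    refine Matrix.PosSemidef.diagonal fun i => ?_
    rw [show c = ((((Fintype.card aO : ℝ) * (Fintype.card bO : ℝ))⁻¹ : ℝ) : ℂ) by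
      rw [hc_def]; push_cast; ring]
    exact Complex.zero_le_real.2 (by positivity)
  · ext i j
    simp only [ptrAOBO, Matrix.of_apply]
    rw [Finset.sum_congr rfl (fun k _ => Finset.sum_congr rfl (fun l _ =>
      if_congr (show ((i.1, k, i.2, l) = (j.1, k, j.2, l)) ↔ i = j by
        constructor
        · intro h; simp only [Prod.ext_iff] at h ⊢; tauto
        · intro h; rw [h]) rfl rfl))]
    simp only [Finset.sum_const, Finset.card_univ, nsmul_eq_mul]
    rw [Matrix.one_apply]
    split_ifs
    · rw [hc_def]; field_simp
    · simp
  · intro i j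
    rw [hAO]
    have hsum : ∑ m : aI, (if ((m, i.2.1, i.2.2) : aI × bI × bO) = (m, j.2.1, j.2.2)
        then ((Fintype.card bO : ℂ))⁻¹ else 0) =
        (Fintype.card aI : ℂ) * (if i.2 = j.2 then ((Fintype.card bO : ℂ))⁻¹ else 0) := by
      rw [Finset.sum_congr rfl (fun m _ => if_congr (show ((m, i.2.1, i.2.2) :
          aI × bI × bO) = (m, j.2.1, j.2.2) ↔ i.2 = j.2 by
        constructor
        · intro h; simp only [Prod.ext_iff] at h ⊢; tauto
        · intro h; simp only [Prod.ext_iff] at h ⊢; tauto) rfl rfl)]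
      rw [Finset.sum_const, Finset.card_univ, nsmul_eq_mul]
    simp only [hAO]
    rw [hsum]
    by_cases h1 : i.1 = j.1 <;> by_cases h2 : i.2 = j.2
    · have hij : i = j := Prod.ext h1 h2
      subst hij
      simp only [if_pos rfl]
      field_simp
      simp [haI]
    · have hij : i ≠ j := fun h => h2 (by rw [h])
      simp [hij, h1, h2]
    · have hij : i ≠ j := fun h => h1 (by rw [h])
      simp [hij, h1]
    · have hij : i ≠ j := fun h => h1 (by rw [h])
      simp [hij, h1]
  · intro i j
    simp only [hBO]
    have hsum : ∑ m : bI, (if ((i.1, i.2.1, m) : aI × aO × bI) = (j.1, j.2.1, m)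
        then ((Fintype.card aO : ℂ))⁻¹ else 0) =
        (Fintype.card bI : ℂ) * (if i.1 = j.1 ∧ i.2.1 = j.2.1 then ((Fintype.card aO : ℂ))⁻¹ else 0) := by
      rw [Finset.sum_congr rfl (fun m _ => if_congr (show ((i.1, i.2.1, m) :
          aI × aO × bI) = (j.1, j.2.1, m) ↔ i.1 = j.1 ∧ i.2.1 = j.2.1 by
        constructor
        · intro h; simp only [Prod.ext_iff] at h ⊢; tauto
        · intro h; simp only [Prod.ext_iff]; tauto) rfl rfl)]
      rw [Finset.sum_const, Finset.card_univ, nsmul_eq_mul]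
    rw [hsum]
    by_cases h1 : i.1 = j.1 <;> by_cases h2 : i.2.1 = j.2.1 <;> by_cases h3 : i.2.2 = j.2.2
    · have hij : i = j := by
        obtain ⟨_, _, _⟩ := i; obtain ⟨_, _, _⟩ := j
        simp_all
      subst hij
      simp only [if_pos rfl, and_self]
      field_simp
      simp [hbI]
    · have hij : i ≠ j := fun h => h3 (by rw [h])
      simp [hij, h1, h2, h3]
    · have hij : i ≠ j := fun h => h2 (by rw [h])
      simp [hij, h1, h2]
    · have hij : i ≠ j := fun h => h2 (by rw [h])
      simp [hij, h1, h2]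
    · have hij : i ≠ j := fun h => h1 (by rw [h])
      simp [hij, h1]
    · have hij : i ≠ j := fun h => h1 (by rw [h])
      simp [hij, h1]
    · have hij : i ≠ j := fun h => h1 (by rw [h])
      simp [hij, h1]
    · have hij : i ≠ j := fun h => h1 (by rw [h])
      simp [hij, h1]

end Aux2

/-- For free process matrices `W0 = ρ ⊗ 1` and `W1 = σ ⊗ 1`,
the optimal success probability is `1/2 + (1/4)·‖ρ - σ‖₁`. -/
theorem statement3 {aI aO bI bO : Type}
    [Fintype aI] [Fintype aO] [Fintype bI] [Fintype bO]
    [DecidableEq aI] [DecidableEq aO] [DecidableEq bI] [DecidableEq bO]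
    [Nonempty aI] [Nonempty aO] [Nonempty bI] [Nonempty bO]
    (ρ σ : Matrix (aI × bI) (aI × bI) ℂ)
    (hρ : ρ.PosSemidef) (hρ1 : ρ.trace = 1) (hσ : σ.PosSemidef) (hσ1 : σ.trace = 1)
    (W0 W1 : Matrix (aI × aO × bI × bO) (aI × aO × bI × bO) ℂ)
    (hW0 : ∀ i j, W0 i j = (if i.2.1 = j.2.1 ∧ i.2.2.2 = j.2.2.2 then 1 else 0) *
        ρ (i.1, i.2.2.1) (j.1, j.2.2.1))
    (hW1 : ∀ i j, W1 i j = (if i.2.1 = j.2.1 ∧ i.2.2.2 = j.2.2.2 then 1 else 0) *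
        σ (i.1, i.2.2.1) (j.1, j.2.2.1)) :
    pSucc W0 W1 = 1/2 + (1/4) * traceNorm (ρ - σ) := by
  classical
  have hD : (ρ - σ).IsHermitian := hρ.isHermitian.sub hσ.isHermitian
  set U := hD.eigenvectorUnitary with hU
  set t := hD.eigenvalues with ht
  set pf : (aI × bI) → ℝ := fun i => max (t i) 0 with hpf
  set mf : (aI × bI) → ℝ := fun i => max (-(t i)) 0 with hmf
  set T : ℝ := ∑ i, pf i with hT
  set M : ℝ := ∑ i, mf i with hM
  have hpm : ∀ i, pf i - mf i = t i := by
    intro i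
    rcases le_total 0 (t i) with h | h
    · rw [hpf, hmf]; dsimp only
      rw [max_eq_left h, max_eq_right (neg_nonpos.2 h), sub_zero]
    · rw [hpf, hmf]; dsimp only
      rw [max_eq_right h, max_eq_left (neg_nonneg.2 h), zero_sub, neg_neg]
  have hspec : ρ - σ = uconj U t := uconj_spectral hD
  have hsplit : ρ - σ = uconj U pf - uconj U mf := by
    rw [uconj_sub]
    rw [show (fun i => pf i - mf i) = t from funext hpm]
    exact hspec
  -- trace of ρ - σ is zero
  have hsum_t : ∑ i, t i = 0 := by
    have h1 : (ρ - σ).trace = 0 := by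
      rw [Matrix.trace_sub, hρ1, hσ1, sub_self]
    rw [hspec, uconj_trace] at h1
    exact_mod_cast h1
  have hMT : M = T := by
    have : T - M = 0 := by
      rw [hT, hM, ← Finset.sum_sub_distrib]
      rw [Finset.sum_congr rfl (fun i _ => hpm i), hsum_t]
    linarith
  -- trace norm computation
  have hsqrt : uconj U (fun i => pf i + mf i) =
      CFC.sqrt ((ρ - σ)ᴴ * (ρ - σ)) := by
    refine (CFC.sqrt_unique ?_ (uconj_psd U _ (fun i => by positivity)).nonneg).symm
    rw [uconj_mul]
    have h2 : (fun i => (pf i + mf i) * (pf i + mf i)) = fun i => t i * t i := by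
      funext i
      rcases le_total 0 (t i) with h | h
      · rw [hpf, hmf]; dsimp only
        rw [max_eq_left h, max_eq_right (neg_nonpos.2 h), add_zero]
      · rw [hpf, hmf]; dsimp only
        rw [max_eq_right h, max_eq_left (neg_nonneg.2 h), zero_add, neg_mul_neg]
    rw [h2, hD.eq, ← uconj_mul, ← hspec]
  have htn : traceNorm (ρ - σ) = 2 * T := by
    have h1 : ((traceNorm (ρ - σ) : ℝ) : ℂ) = ((T + M : ℝ) : ℂ) := by
      rw [aux_traceNorm_eq_trace_sqrt, ← hsqrt, uconj_trace]
      congr 1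
      rw [hT, hM, ← Finset.sum_add_distrib]
    have h2 : traceNorm (ρ - σ) = T + M := by exact_mod_cast h1
    rw [h2, hMT]; ring
  -- upper bound
  have hub : ∀ P0 : Matrix (aI × bI) (aI × bI) ℂ, P0.PosSemidef → (1 - P0).PosSemidef →
      (((ρ - σ) * P0).trace).re ≤ T := by
    intro P0 h0 h1
    have e1 : 0 ≤ ((uconj U mf * P0).trace).re :=
      (Complex.le_def.mp (aux_trace_mul_nonneg (uconj_psd U mf (fun i => le_max_right _ _)) h0)).1
    have e2 : ((uconj U pf * P0).trace).re ≤ T := by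
      have h3 : 0 ≤ ((uconj U pf * (1 - P0)).trace).re :=
        (Complex.le_def.mp (aux_trace_mul_nonneg
          (uconj_psd U pf (fun i => le_max_right _ _)) h1)).1
      have h4 : (uconj U pf * (1 - P0)).trace = ((T : ℝ) : ℂ) - (uconj U pf * P0).trace := by
        rw [Matrix.mul_sub, Matrix.mul_one, Matrix.trace_sub, uconj_trace, hT]
      rw [h4, Complex.sub_re, Complex.ofReal_re] at h3
      linarith
    have hdec : (((ρ - σ) * P0).trace).re =
        ((uconj U pf * P0).trace).re - ((uconj U mf * P0).trace).re := by
      rw [hsplit, Matrix.sub_mul, Matrix.trace_sub, Complex.sub_re]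
    rw [hdec]
    linarith
  -- the optimal projector
  set ind : (aI × bI) → ℝ := fun i => if 0 ≤ t i then 1 else 0 with hind
  set P : Matrix (aI × bI) (aI × bI) ℂ := uconj U ind with hP
  have hPpsd : P.PosSemidef := uconj_psd U ind (fun i => by rw [hind]; dsimp only; split <;> norm_num)
  have hQeq : 1 - P = uconj U (fun i => 1 - ind i) := by
    rw [hP, ← uconj_sub, uconj_one]
  have hQpsd : (1 - P).PosSemidef := by
    rw [hQeq]
    refine uconj_psd U _ (fun i => ?_)
    rw [hind]; dsimp only; split <;> norm_num
  have htrDP : ((ρ - σ) * P).trace = ((T : ℝ) : ℂ) := by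
    rw [hspec, hP, uconj_mul, uconj_trace]
    congr 1
    rw [hT]
    refine Finset.sum_congr rfl (fun i _ => ?_)
    rw [hind, hpf]; dsimp only
    split
    · rename_i h; rw [mul_one, max_eq_left h]
    · rename_i h; rw [mul_zero, max_eq_right (le_of_not_ge h)]
  -- the optimal strategy
  set cR : ℝ := ((Fintype.card aO : ℝ) * (Fintype.card bO : ℝ))⁻¹ with hcR
  have hcRnn : (0:ℝ) ≤ cR := by rw [hcR]; positivity
  have haO : (Fintype.card aO : ℂ) ≠ 0 := Nat.cast_ne_zero.2 Fintype.card_ne_zero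
  have hbO : (Fintype.card bO : ℂ) ≠ 0 := Nat.cast_ne_zero.2 Fintype.card_ne_zero
  set S0 : Matrix (aI × aO × bI × bO) (aI × aO × bI × bO) ℂ :=
    Matrix.of fun i j => (if i.2.1 = j.2.1 ∧ i.2.2.2 = j.2.2.2 then ((cR : ℝ) : ℂ) else 0) *
      P (i.1, i.2.2.1) (j.1, j.2.2.1) with hS0
  set S1 : Matrix (aI × aO × bI × bO) (aI × aO × bI × bO) ℂ :=
    Matrix.of fun i j => (if i.2.1 = j.2.1 ∧ i.2.2.2 = j.2.2.2 then ((cR : ℝ) : ℂ) else 0) *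
      (1 - P) (i.1, i.2.2.1) (j.1, j.2.2.1) with hS1
  have hS0psd : S0.PosSemidef := freeScaled_posSemidef P hPpsd cR hcRnn
  have hS1psd : S1.PosSemidef := freeScaled_posSemidef (1 - P) hQpsd cR hcRnn
  have hcast : ((cR : ℝ) : ℂ) = ((Fintype.card aO : ℂ) * (Fintype.card bO : ℂ))⁻¹ := by
    rw [hcR]; push_cast; ring
  have hadd : S0 + S1 = Matrix.of fun (i j : aI × aO × bI × bO) =>
      if i = j then ((Fintype.card aO : ℂ) * (Fintype.card bO : ℂ))⁻¹ else 0 := by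
    ext i j
    simp only [Matrix.add_apply, Matrix.of_apply, hS0, hS1]
    rw [← mul_add]
    have hsum1 : P (i.1, i.2.2.1) (j.1, j.2.2.1) + (1 - P) (i.1, i.2.2.1) (j.1, j.2.2.1) =
        if ((i.1, i.2.2.1) : aI × bI) = (j.1, j.2.2.1) then 1 else 0 := by
      simp [Matrix.sub_apply, Matrix.one_apply]
    rw [hsum1]
    by_cases hij : i = j
    · subst hij
      rw [if_pos rfl, if_pos ⟨rfl, rfl⟩, if_pos rfl, mul_one, hcast]
    · rw [if_neg hij]
      by_cases h12 : i.2.1 = j.2.1 ∧ i.2.2.2 = j.2.2.2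
      · have h3 : ¬(((i.1, i.2.2.1) : aI × bI) = (j.1, j.2.2.1)) := by
          intro h3
          apply hij
          rw [Prod.ext_iff] at h3
          obtain ⟨a, k, b, l⟩ := i
          obtain ⟨a', k', b', l'⟩ := j
          simp only [Prod.ext_iff]
          exact ⟨h3.1, h12.1, h3.2, h12.2⟩
        rw [if_neg h3, mul_zero]
      · rw [if_neg h12, zero_mul]
  have hmemNS : MemNS (S0 + S1) := by rw [hadd]; exact memNS_scaledId
  have hptr0 : ptrAOBO S0 = P := by
    ext u v
    simp only [ptrAOBO, hS0, Matrix.of_apply, and_self, if_true, Finset.sum_const,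
      Finset.card_univ, nsmul_eq_mul]
    rw [hcast]
    rw [mul_inv]
    field_simp
  have hptr1 : ptrAOBO S1 = 1 - P := by
    ext u v
    simp only [ptrAOBO, hS1, Matrix.of_apply, and_self, if_true, Finset.sum_const,
      Finset.card_univ, nsmul_eq_mul]
    rw [hcast]
    rw [mul_inv]
    field_simp
  have hval : (W0 * S0).trace + (W1 * S1).trace = 1 + ((T : ℝ) : ℂ) := by
    rw [trace_free_mul ρ W0 S0 hW0, trace_free_mul σ W1 S1 hW1, hptr0, hptr1]
    have h5 : (σ * (1 - P)).trace = σ.trace - (σ * P).trace := by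
      rw [Matrix.mul_sub, Matrix.mul_one, Matrix.trace_sub]
    have h6 : ((ρ - σ) * P).trace = (ρ * P).trace - (σ * P).trace := by
      rw [Matrix.sub_mul, Matrix.trace_sub]
    rw [htrDP] at h6
    rw [h5, hσ1]
    linear_combination -h6
  -- the supremum
  have hgreat : IsGreatest { x : ℝ | ∃ S0 S1 : Matrix (aI × aO × bI × bO) (aI × aO × bI × bO) ℂ,
      S0.PosSemidef ∧ S1.PosSemidef ∧ MemNS (S0 + S1) ∧
      x = ((W0 * S0).trace + (W1 * S1).trace).re } (1 + T) := by
    constructor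
    · refine ⟨S0, S1, hS0psd, hS1psd, hmemNS, ?_⟩
      rw [hval]
      simp
    · rintro x ⟨R0, R1, hR0, hR1, hNS, rfl⟩
      have hPtr : ptrAOBO R0 + ptrAOBO R1 = 1 := by
        rw [← ptrAOBO_add]; exact hNS.trChannel
      have hP0psd : (ptrAOBO R0).PosSemidef := ptrAOBO_posSemidef hR0
      have hP0c : (1 - ptrAOBO R0).PosSemidef := by
        have : (1 : Matrix (aI × bI) (aI × bI) ℂ) - ptrAOBO R0 = ptrAOBO R1 := by
          rw [← hPtr]; abel
        rw [this]
        exact ptrAOBO_posSemidef hR1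
      have hv : (W0 * R0).trace + (W1 * R1).trace = 1 + ((ρ - σ) * ptrAOBO R0).trace := by
        rw [trace_free_mul ρ W0 R0 hW0, trace_free_mul σ W1 R1 hW1]
        have h5 : ptrAOBO R1 = 1 - ptrAOBO R0 := by rw [← hPtr]; abel
        rw [h5]
        have h6 : (σ * (1 - ptrAOBO R0)).trace = σ.trace - (σ * ptrAOBO R0).trace := by
          rw [Matrix.mul_sub, Matrix.mul_one, Matrix.trace_sub]
        have h7 : ((ρ - σ) * ptrAOBO R0).trace =
            (ρ * ptrAOBO R0).trace - (σ * ptrAOBO R0).trace := by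
          rw [Matrix.sub_mul, Matrix.trace_sub]
        rw [h6, hσ1]
        linear_combination -h7
      rw [hv, Complex.add_re, Complex.one_re]
      have := hub (ptrAOBO R0) hP0psd hP0c
      linarith
  rw [pSucc, hgreat.csSup_eq, htn]
  ring

end ProcessMatrices
end

section
/- A process matrix W on A_I⊗A_O⊗B_I⊗B_O belongs to both W^{A≺B} and W^{B≺A} if and only if W is free, i.e. W = ρ ⊗ 1_{A_O⊗B_O} for some density operator ρ on A_I⊗B_I. In other words, W^{A||B} = W^{A≺B} ∩ W^{B≺A}. -/
open scoped ComplexOrder Matrix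

namespace ProcessMatrices

variable {aI aO bI bO : Type} [Fintype aI] [Fintype aO] [Fintype bI] [Fintype bO]
  [DecidableEq aI] [DecidableEq aO] [DecidableEq bI] [DecidableEq bO]
  [Nonempty aI] [Nonempty aO] [Nonempty bI] [Nonempty bO]

/-- A process matrix belongs to both `W^{A≺B}` and `W^{B≺A}` if and
only if it is free: `W^{A||B} = W^{A≺B} ∩ W^{B≺A}`. -/
theorem statement11 {aI aO bI bO : Type}
    [Fintype aI] [Fintype aO] [Fintype bI] [Fintype bO]
    [DecidableEq aI] [DecidableEq aO] [DecidableEq bI] [DecidableEq bO]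
    [Nonempty aI] [Nonempty aO] [Nonempty bI] [Nonempty bO]
    (W : Matrix (aI × aO × bI × bO) (aI × aO × bI × bO) ℂ)
    (hW : IsProcessMatrix W) :
    MemFree W ↔ (MemCombAB W ∧ MemCombBA W) := by
  constructor
  · rintro ⟨ρ, hρ, htr, hρW⟩
    refine ⟨⟨hW, ?_⟩, hW, ?_⟩
    · refine ⟨fun x y => (if x.2.1 = y.2.1 then 1 else 0) * ρ (x.1, x.2.2) (y.1, y.2.2),
        ?_, fun a a' => ∑ k : bI, ρ (a, k) (a', k), ?_⟩
      · intro i j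
        by_cases h1 : i.2.1 = j.2.1 <;> by_cases h2 : i.2.2.2 = j.2.2.2 <;>
          simp [hρW, h1, h2]
      · intro p q
        rw [Finset.mul_sum]
    · refine ⟨fun x y => (if x.2.2 = y.2.2 then 1 else 0) * ρ (x.1, x.2.1) (y.1, y.2.1),
        ?_, fun b b' => ∑ k : aI, ρ (k, b) (k, b'), ?_⟩
      · intro i j
        by_cases h1 : i.2.1 = j.2.1 <;> by_cases h2 : i.2.2.2 = j.2.2.2 <;>
          simp [hρW, h1, h2]
      · intro p q
        rw [Finset.mul_sum]
  · rintro ⟨⟨-, W1, hW1, -⟩, -, W2, hW2, -⟩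
    obtain ⟨o₀⟩ := ‹Nonempty aO›
    obtain ⟨β₀⟩ := ‹Nonempty bO›
    have key : ∀ (a a' : aI) (b b' : bI) (o : aO) (β : bO),
        W (a, o, b, β) (a', o, b', β) = W (a, o₀, b, β₀) (a', o₀, b', β₀) := by
      intro a a' b b' o β
      have h1 := hW2 (a, o, b, β) (a', o, b', β)
      have h2 := hW2 (a, o₀, b, β) (a', o₀, b', β)
      have h3 := hW1 (a, o₀, b, β) (a', o₀, b', β)
      have h4 := hW1 (a, o₀, b, β₀) (a', o₀, b', β₀)
      simp only [if_pos rfl, one_mul] at h1 h2 h3 h4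
      rw [h1, ← h2, h3, ← h4]
    refine ⟨fun x y => W (x.1, o₀, x.2, β₀) (y.1, o₀, y.2, β₀), ?_, ?_, ?_⟩
    · exact hW.posSemidef.submatrix (fun x : aI × bI => (x.1, o₀, x.2, β₀))
    · have ht := hW.traceEq
      have h1 : W.trace = (Fintype.card aO : ℂ) * (Fintype.card bO : ℂ) *
          ∑ x : aI × bI, W (x.1, o₀, x.2, β₀) (x.1, o₀, x.2, β₀) := by
        rw [Matrix.trace]
        have : ∀ i : aI × aO × bI × bO, W.diag i =
            W (i.1, o₀, i.2.2.1, β₀) (i.1, o₀, i.2.2.1, β₀) := by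
          rintro ⟨a, o, b, β⟩
          exact key a a b b o β
        rw [Finset.sum_congr rfl (fun i _ => this i)]
        simp only [Fintype.sum_prod_type]
        simp only [Finset.sum_const, Finset.card_univ, nsmul_eq_mul]
        rw [Finset.mul_sum]
        refine Finset.sum_congr rfl fun a _ => ?_
        rw [← Finset.mul_sum]
        ring
      have hc : ((Fintype.card aO : ℂ) * (Fintype.card bO : ℂ)) ≠ 0 := by
        simp [Fintype.card_ne_zero]
      have := ht ▸ h1
      have : (Fintype.card aO : ℂ) * (Fintype.card bO : ℂ) *
          ∑ x : aI × bI, W (x.1, o₀, x.2, β₀) (x.1, o₀, x.2, β₀) =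
          (Fintype.card aO : ℂ) * (Fintype.card bO : ℂ) * 1 := by
        rw [← h1, ht, mul_one]
      have hS := mul_left_cancel₀ hc this
      simpa [Matrix.trace, Matrix.diag] using hS
    · rintro ⟨a, o, b, β⟩ ⟨a', o', b', β'⟩
      by_cases ho : o = o'
      · by_cases hβ : β = β'
        · subst ho; subst hβ
          simpa using key a a' b b' o β
        · have h := hW1 (a, o, b, β) (a', o', b', β')
          simp only [if_neg hβ, zero_mul] at h
          simp [h, hβ]
      · have h := hW2 (a, o, b, β) (a', o', b', β')
        simp only [if_neg ho, zero_mul] at h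
        simp [h, ho]

end ProcessMatrices
end
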